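/- Let F: ℝ⁵ → ℝ⁵ be the drift of the full model and let ρ₁, ρ₂, ρ₃ be the (constant) columns of the diffusion matrix, which are nonzero multiples of the first three standard basis vectors e₁, e₂, e₃ in ℝ⁵. Then the iterated Lie brackets [[F, ρ₁], ρ₃] and [[F, ρ₂], ρ₃] are nonzero constant multiples of e₄ and e₅ respectively, so that {ρ₁, ρ₂, ρ₃, [[F,ρ₁],ρ₃], [[F,ρ₂],ρ₃]} spans ℝ⁵. -/

import Mathlib

set_option maxHeartbeats 2000000

private lemma hasDerivAt_cubic (a b c d : ℝ) :
    HasDerivAt (fun t : ℝ => a + (b*t^1 + (c*t^2 + d*t^3))) b 0 := by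
  have h := (hasDerivAt_const (0:ℝ) a).add
    ((((hasDerivAt_pow 1 (0:ℝ)).const_mul b)).add
      ((((hasDerivAt_pow 2 (0:ℝ)).const_mul c)).add (((hasDerivAt_pow 3 (0:ℝ)).const_mul d))))
  have e1 : (fun t : ℝ => a + (b*t^1 + (c*t^2 + d*t^3))) =
      (fun x : ℝ => a) + ((fun y : ℝ => b * y ^ 1) + ((fun y : ℝ => c * y ^ 2) + fun y : ℝ => d * y ^ 3)) := by
    funext t; simp
  rw [e1]
  exact h.congr_deriv (by norm_num)

private lemma key_fderiv {f : (Fin 5 → ℝ) → (Fin 5 → ℝ)} {u ρ g : Fin 5 → ℝ}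
    (hdiff : DifferentiableAt ℝ f u)
    (h : HasDerivAt (fun t : ℝ => f (u + t • ρ)) g 0) : fderiv ℝ f u ρ = g := by
  rw [← hdiff.lineDeriv_eq_fderiv, lineDeriv]
  exact h.deriv

/-- For the full Stommel drift `F : ℝ⁵ → ℝ⁵` and constant vector fields
`ρ₁, ρ₂, ρ₃` that are nonzero multiples of `e₁, e₂, e₃`, the iterated Lie
brackets `[[F,ρ₁],ρ₃]` and `[[F,ρ₂],ρ₃]` (second directional derivatives of
`F`) are nonzero constant multiples of `e₄` and `e₅` respectively, so that
`{ρ₁, ρ₂, ρ₃, [[F,ρ₁],ρ₃], [[F,ρ₂],ρ₃]}` spans `ℝ⁵`. -/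
theorem stmt_11 (εT ε Pa P : ℝ) (hεT : 0 < εT) (hε : 0 < ε) (hPa : 0 < Pa) (hP : 0 < P)
    (F : (Fin 5 → ℝ) → (Fin 5 → ℝ))
    (hF : ∀ u : Fin 5 → ℝ, F u =
      ![-(u 0 - 1)/εT - (1 + Pa*(u 0 - u 1)^2)*(u 0) + 4*(u 2)*(u 3),
        1 - (1 + Pa*(u 0 - u 1)^2)*(u 1) + 4*(u 2)*(u 4),
        -(u 2)/ε,
        -((u 3) + 2*P^2*(u 2)*(u 0))/ε,
        -((u 4) + 2*P^2*(u 2)*(u 1))/ε])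
    (c₁ c₂ c₃ : ℝ) (hc₁ : c₁ ≠ 0) (hc₂ : c₂ ≠ 0) (hc₃ : c₃ ≠ 0)
    (ρ₁ ρ₂ ρ₃ : Fin 5 → ℝ)
    (hρ₁ : ρ₁ = c₁ • (Pi.single 0 1 : Fin 5 → ℝ))
    (hρ₂ : ρ₂ = c₂ • (Pi.single 1 1 : Fin 5 → ℝ))
    (hρ₃ : ρ₃ = c₃ • (Pi.single 2 1 : Fin 5 → ℝ)) :
    (∀ u : Fin 5 → ℝ,
      fderiv ℝ (fun w => fderiv ℝ F w ρ₁) u ρ₃ =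
        (c₁ * c₃ * (-2*P^2/ε)) • (Pi.single 3 1 : Fin 5 → ℝ)) ∧
    (∀ u : Fin 5 → ℝ,
      fderiv ℝ (fun w => fderiv ℝ F w ρ₂) u ρ₃ =
        (c₂ * c₃ * (-2*P^2/ε)) • (Pi.single 4 1 : Fin 5 → ℝ)) ∧
    Submodule.span ℝ {ρ₁, ρ₂, ρ₃,
      (c₁ * c₃ * (-2*P^2/ε)) • (Pi.single 3 1 : Fin 5 → ℝ),
      (c₂ * c₃ * (-2*P^2/ε)) • (Pi.single 4 1 : Fin 5 → ℝ)} = ⊤ := by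
  have hFe : F = fun u => ![-(u 0 - 1)/εT - (1 + Pa*(u 0 - u 1)^2)*(u 0) + 4*(u 2)*(u 3),
        1 - (1 + Pa*(u 0 - u 1)^2)*(u 1) + 4*(u 2)*(u 4),
        -(u 2)/ε,
        -((u 3) + 2*P^2*(u 2)*(u 0))/ε,
        -((u 4) + 2*P^2*(u 2)*(u 1))/ε] := funext hF
  have s0 : (Pi.single (0:Fin 5) (1:ℝ)) = ![1,0,0,0,0] := by funext j; fin_cases j <;> simp
  have s1 : (Pi.single (1:Fin 5) (1:ℝ)) = ![0,1,0,0,0] := by funext j; fin_cases j <;> simp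
  have s2 : (Pi.single (2:Fin 5) (1:ℝ)) = ![0,0,1,0,0] := by funext j; fin_cases j <;> simp
  have s3 : (Pi.single (3:Fin 5) (1:ℝ)) = ![0,0,0,1,0] := by funext j; fin_cases j <;> simp
  have s4 : (Pi.single (4:Fin 5) (1:ℝ)) = ![0,0,0,0,1] := by funext j; fin_cases j <;> simp
  have hFdiff : Differentiable ℝ F := by
    rw [hFe, differentiable_pi]
    intro i; fin_cases i <;> simp <;> fun_prop
  set G1 : (Fin 5 → ℝ) → (Fin 5 → ℝ) := fun w =>
    ![c₁*(-(1/εT) - (1+Pa*(w 0 - w 1)^2) - 2*Pa*(w 0 - w 1)*(w 0)),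
      -2*Pa*(w 0 - w 1)*c₁*(w 1), 0, -(2*P^2*(w 2)*c₁)/ε, 0] with hG1def
  set G2 : (Fin 5 → ℝ) → (Fin 5 → ℝ) := fun w =>
    ![2*Pa*(w 0 - w 1)*c₂*(w 0),
      c₂*(-(1+Pa*(w 0 - w 1)^2) + 2*Pa*(w 0 - w 1)*(w 1)), 0, 0, -(2*P^2*(w 2)*c₂)/ε] with hG2def
  have hG1 : ∀ w, fderiv ℝ F w ρ₁ = G1 w := by
    intro w
    refine key_fderiv (hFdiff w) ?_
    have hcomp : (fun t : ℝ => F (w + t • ρ₁)) = (fun t : ℝ =>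
      ![(-(w 0 - 1)/εT - (1 + Pa*(w 0 - w 1)^2)*(w 0) + 4*(w 2)*(w 3)) +
          ((c₁*(-(1/εT) - (1+Pa*(w 0 - w 1)^2) - 2*Pa*(w 0 - w 1)*(w 0)))*t^1 +
            ((-(Pa*c₁^2*(w 0 + 2*(w 0 - w 1))))*t^2 + (-(Pa*c₁^3))*t^3)),
        (1 - (1 + Pa*(w 0 - w 1)^2)*(w 1) + 4*(w 2)*(w 4)) +
          ((-2*Pa*(w 0 - w 1)*c₁*(w 1))*t^1 + ((-(Pa*c₁^2*(w 1)))*t^2 + (0:ℝ)*t^3)),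
        (-(w 2)/ε) + ((0:ℝ)*t^1 + ((0:ℝ)*t^2 + (0:ℝ)*t^3)),
        (-((w 3) + 2*P^2*(w 2)*(w 0))/ε) + ((-(2*P^2*(w 2)*c₁)/ε)*t^1 + ((0:ℝ)*t^2 + (0:ℝ)*t^3)),
        (-((w 4) + 2*P^2*(w 2)*(w 1))/ε) + ((0:ℝ)*t^1 + ((0:ℝ)*t^2 + (0:ℝ)*t^3))]) := by
      funext t
      rw [hF]
      funext j
      fin_cases j <;>
        simp [hρ₁, s0, Pi.add_apply, Pi.smul_apply, smul_eq_mul] <;> ring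
    rw [hcomp, hasDerivAt_pi]
    intro i
    fin_cases i <;> simp only [hG1def, Matrix.cons_val_zero, Matrix.cons_val_one,
      Matrix.head_cons, Matrix.cons_val_two, Matrix.tail_cons, Matrix.cons_val_three,
      Matrix.cons_val_four, Fin.isValue] <;>
      exact hasDerivAt_cubic _ _ _ _
  have hG2 : ∀ w, fderiv ℝ F w ρ₂ = G2 w := by
    intro w
    refine key_fderiv (hFdiff w) ?_
    have hcomp : (fun t : ℝ => F (w + t • ρ₂)) = (fun t : ℝ =>
      ![(-(w 0 - 1)/εT - (1 + Pa*(w 0 - w 1)^2)*(w 0) + 4*(w 2)*(w 3)) +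
          ((2*Pa*(w 0 - w 1)*c₂*(w 0))*t^1 + ((-(Pa*c₂^2*(w 0)))*t^2 + (0:ℝ)*t^3)),
        (1 - (1 + Pa*(w 0 - w 1)^2)*(w 1) + 4*(w 2)*(w 4)) +
          ((c₂*(-(1+Pa*(w 0 - w 1)^2) + 2*Pa*(w 0 - w 1)*(w 1)))*t^1 +
            ((-(Pa*c₂^2*((w 1) - 2*(w 0 - w 1))))*t^2 + (-(Pa*c₂^3))*t^3)),
        (-(w 2)/ε) + ((0:ℝ)*t^1 + ((0:ℝ)*t^2 + (0:ℝ)*t^3)),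
        (-((w 3) + 2*P^2*(w 2)*(w 0))/ε) + ((0:ℝ)*t^1 + ((0:ℝ)*t^2 + (0:ℝ)*t^3)),
        (-((w 4) + 2*P^2*(w 2)*(w 1))/ε) + ((-(2*P^2*(w 2)*c₂)/ε)*t^1 + ((0:ℝ)*t^2 + (0:ℝ)*t^3))]) := by
      funext t
      rw [hF]
      funext j
      fin_cases j <;>
        simp [hρ₂, s1, Pi.add_apply, Pi.smul_apply, smul_eq_mul] <;> ring
    rw [hcomp, hasDerivAt_pi]
    intro i
    fin_cases i <;> simp only [hG2def, Matrix.cons_val_zero, Matrix.cons_val_one,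
      Matrix.head_cons, Matrix.cons_val_two, Matrix.tail_cons, Matrix.cons_val_three,
      Matrix.cons_val_four, Fin.isValue] <;>
      exact hasDerivAt_cubic _ _ _ _
  have hG1diff : Differentiable ℝ G1 := by
    rw [hG1def, differentiable_pi]
    intro i; fin_cases i <;> simp <;> fun_prop
  have hG2diff : Differentiable ℝ G2 := by
    rw [hG2def, differentiable_pi]
    intro i; fin_cases i <;> simp <;> fun_prop
  refine ⟨?_, ?_, ?_⟩
  · intro u
    have h1 : (fun w => fderiv ℝ F w ρ₁) = G1 := funext hG1
    rw [h1]
    refine key_fderiv (hG1diff u) ?_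
    have hV : (c₁ * c₃ * (-2*P^2/ε)) • (Pi.single 3 1 : Fin 5 → ℝ) =
        ![0, 0, 0, c₁ * c₃ * (-2*P^2/ε), 0] := by
      funext j; fin_cases j <;> simp [s3]
    rw [hV]
    have hcomp : (fun t : ℝ => G1 (u + t • ρ₃)) = (fun t : ℝ =>
      ![(c₁*(-(1/εT) - (1+Pa*(u 0 - u 1)^2) - 2*Pa*(u 0 - u 1)*(u 0))) + ((0:ℝ)*t^1 + ((0:ℝ)*t^2 + (0:ℝ)*t^3)),
        (-2*Pa*(u 0 - u 1)*c₁*(u 1)) + ((0:ℝ)*t^1 + ((0:ℝ)*t^2 + (0:ℝ)*t^3)),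
        (0:ℝ) + ((0:ℝ)*t^1 + ((0:ℝ)*t^2 + (0:ℝ)*t^3)),
        (-(2*P^2*(u 2)*c₁)/ε) + ((c₁ * c₃ * (-2*P^2/ε))*t^1 + ((0:ℝ)*t^2 + (0:ℝ)*t^3)),
        (0:ℝ) + ((0:ℝ)*t^1 + ((0:ℝ)*t^2 + (0:ℝ)*t^3))]) := by
      funext t
      rw [hG1def]
      funext j
      fin_cases j <;>
        simp [hρ₃, s2, Pi.add_apply, Pi.smul_apply, smul_eq_mul] <;> ring
    rw [hcomp, hasDerivAt_pi]
    intro i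
    fin_cases i <;> exact hasDerivAt_cubic _ _ _ _
  · intro u
    have h2 : (fun w => fderiv ℝ F w ρ₂) = G2 := funext hG2
    rw [h2]
    refine key_fderiv (hG2diff u) ?_
    have hV : (c₂ * c₃ * (-2*P^2/ε)) • (Pi.single 4 1 : Fin 5 → ℝ) =
        ![0, 0, 0, 0, c₂ * c₃ * (-2*P^2/ε)] := by
      funext j; fin_cases j <;> simp [s4]
    rw [hV]
    have hcomp : (fun t : ℝ => G2 (u + t • ρ₃)) = (fun t : ℝ =>
      ![(2*Pa*(u 0 - u 1)*c₂*(u 0)) + ((0:ℝ)*t^1 + ((0:ℝ)*t^2 + (0:ℝ)*t^3)),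
        (c₂*(-(1+Pa*(u 0 - u 1)^2) + 2*Pa*(u 0 - u 1)*(u 1))) + ((0:ℝ)*t^1 + ((0:ℝ)*t^2 + (0:ℝ)*t^3)),
        (0:ℝ) + ((0:ℝ)*t^1 + ((0:ℝ)*t^2 + (0:ℝ)*t^3)),
        (0:ℝ) + ((0:ℝ)*t^1 + ((0:ℝ)*t^2 + (0:ℝ)*t^3)),
        (-(2*P^2*(u 2)*c₂)/ε) + ((c₂ * c₃ * (-2*P^2/ε))*t^1 + ((0:ℝ)*t^2 + (0:ℝ)*t^3))]) := by
      funext t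
      rw [hG2def]
      funext j
      fin_cases j <;>
        simp [hρ₃, s2, Pi.add_apply, Pi.smul_apply, smul_eq_mul] <;> ring
    rw [hcomp, hasDerivAt_pi]
    intro i
    fin_cases i <;> exact hasDerivAt_cubic _ _ _ _
  · set S : Set (Fin 5 → ℝ) := {ρ₁, ρ₂, ρ₃,
      (c₁ * c₃ * (-2*P^2/ε)) • (Pi.single 3 1 : Fin 5 → ℝ),
      (c₂ * c₃ * (-2*P^2/ε)) • (Pi.single 4 1 : Fin 5 → ℝ)} with hS
    have hc4 : c₁ * c₃ * (-2*P^2/ε) ≠ 0 := by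
      apply mul_ne_zero (mul_ne_zero hc₁ hc₃)
      have hp2 : P^2 ≠ 0 := pow_ne_zero _ hP.ne'
      have he : ε ≠ 0 := hε.ne'
      field_simp
      exact neg_ne_zero.mpr (div_ne_zero (mul_ne_zero two_ne_zero hp2) he)
    have hc5 : c₂ * c₃ * (-2*P^2/ε) ≠ 0 := by
      apply mul_ne_zero (mul_ne_zero hc₂ hc₃)
      have hp2 : P^2 ≠ 0 := pow_ne_zero _ hP.ne'
      have he : ε ≠ 0 := hε.ne'
      field_simp
      exact neg_ne_zero.mpr (div_ne_zero (mul_ne_zero two_ne_zero hp2) he)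
    have mem : ∀ (c : ℝ) (v : Fin 5 → ℝ), c ≠ 0 → (c • v) ∈ S →
        v ∈ Submodule.span ℝ S := by
      intro c v hc hv
      have h := Submodule.smul_mem (Submodule.span ℝ S) c⁻¹ (Submodule.subset_span hv)
      rwa [smul_smul, inv_mul_cancel₀ hc, one_smul] at h
    have hsingle : ∀ i : Fin 5, (Pi.single i 1 : Fin 5 → ℝ) ∈ Submodule.span ℝ S := by
      intro i
      fin_cases i
      · refine mem c₁ _ hc₁ ?_
        show c₁ • (Pi.single 0 1 : Fin 5 → ℝ) ∈ S
        rw [← hρ₁, hS]; simp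
      · refine mem c₂ _ hc₂ ?_
        show c₂ • (Pi.single 1 1 : Fin 5 → ℝ) ∈ S
        rw [← hρ₂, hS]; simp
      · refine mem c₃ _ hc₃ ?_
        show c₃ • (Pi.single 2 1 : Fin 5 → ℝ) ∈ S
        rw [← hρ₃, hS]; simp
      · refine mem _ _ hc4 ?_
        show (c₁ * c₃ * (-2*P^2/ε)) • (Pi.single 3 1 : Fin 5 → ℝ) ∈ S
        rw [hS]; simp
      · refine mem _ _ hc5 ?_
        show (c₂ * c₃ * (-2*P^2/ε)) • (Pi.single 4 1 : Fin 5 → ℝ) ∈ S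
        rw [hS]; simp
    rw [eq_top_iff]
    intro x _
    have hx : x = ∑ i : Fin 5, x i • (Pi.single i 1 : Fin 5 → ℝ) := by
      funext j
      simp [Pi.single_apply, Finset.sum_ite_eq, mul_comm]
    rw [hx]
    exact Submodule.sum_mem _ fun i _ => Submodule.smul_mem _ _ (hsingle i)
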